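/- arXiv:quant-ph/0502165 — 2 statements merged into one kernel-verified Lean document; each statement's English description precedes it below -/
import Mathlib

section
/- Let A be an n×n complex matrix and let V be a unitary matrix satisfying the polar decomposition A = |A|·V, where |A| = √(A·A†). Then for every unitary matrix U one has |Tr(A·U)| ≤ Tr(|A|), and equality is attained at U = V†, i.e. Tr(A·V†) = Tr(|A|). Consequently the maximum of |Tr(A·U)| over all unitary U equals Tr(|A|). -/
open Matrix
open scoped ComplexOrder

/-- The positive semidefinite square root of a matrix (zero if the matrix is not
positive semidefinite). -/
noncomputable def msqrt {n : ℕ} (A : Matrix (Fin n) (Fin n) ℂ) : Matrix (Fin n) (Fin n) ℂ :=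
  open scoped Classical in
  if h : A.PosSemidef then
    (h.1.eigenvectorUnitary : Matrix (Fin n) (Fin n) ℂ) *
      diagonal ((↑) ∘ (√·) ∘ h.1.eigenvalues) *
      (star h.1.eigenvectorUnitary : Matrix (Fin n) (Fin n) ℂ)
  else 0

lemma msqrt_spec {n : ℕ} (P : Matrix (Fin n) (Fin n) ℂ) (hP : P.PosSemidef) :
    (msqrt P).PosSemidef ∧ (msqrt P)ᴴ = msqrt P ∧ msqrt P * msqrt P = P := by
  have hUU : (star hP.1.eigenvectorUnitary : Matrix (Fin n) (Fin n) ℂ) *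
      (hP.1.eigenvectorUnitary : Matrix (Fin n) (Fin n) ℂ) = 1 :=
    Unitary.coe_star_mul_self _
  have hD : (diagonal ((↑) ∘ (√·) ∘ hP.1.eigenvalues) : Matrix (Fin n) (Fin n) ℂ).PosSemidef := by
    rw [posSemidef_diagonal_iff]
    intro i
    simp only [Function.comp_apply]
    exact Complex.zero_le_real.mpr (Real.sqrt_nonneg _)
  have hpsd : (msqrt P).PosSemidef := by
    rw [msqrt, dif_pos hP, star_eq_conjTranspose]
    exact hD.mul_mul_conjTranspose_same _
  refine ⟨hpsd, hpsd.1, ?_⟩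
  rw [msqrt, dif_pos hP]
  conv_rhs => rw [hP.1.spectral_theorem, Unitary.conjStarAlgAut_apply]
  rw [show ∀ a b c d e f : Matrix (Fin n) (Fin n) ℂ, a * b * c * (d * e * f) = a * (b * (c * d) * e) * f
    from fun a b c d e f => by simp only [mul_assoc], hUU, Matrix.mul_one, diagonal_mul_diagonal]
  congr 3
  funext i
  simp only [Function.comp_apply]
  rw [← Complex.ofReal_mul, Real.mul_self_sqrt (hP.eigenvalues_nonneg i)]
  rfl


lemma re_trace_mul_conjTranspose {n : ℕ} (M : Matrix (Fin n) (Fin n) ℂ) :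
    ((M * Mᴴ).trace).re = ∑ i, ∑ j, ‖M i j‖ ^ 2 := by
  simp only [Matrix.trace, Matrix.diag, Matrix.mul_apply, Matrix.conjTranspose_apply]
  rw [Complex.re_sum]
  refine Finset.sum_congr rfl fun i _ => ?_
  rw [Complex.re_sum]
  refine Finset.sum_congr rfl fun j _ => ?_
  rw [show star (M i j) = (starRingEnd ℂ) (M i j) from rfl, Complex.mul_conj']
  norm_cast

/-- Cauchy-Schwarz bound: for P PSD and W unitary, |Tr(P W)| ≤ (Tr P).re. -/
lemma abs_trace_psd_mul_unitary {n : ℕ} (P W : Matrix (Fin n) (Fin n) ℂ)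
    (hP : P.PosSemidef) (hW : W * Wᴴ = 1) :
    ‖(P * W).trace‖ ≤ P.trace.re := by
  set S := msqrt P with hSdef
  have hSH : Sᴴ = S := (msqrt_spec P hP).2.1
  have hSS : S * S = P := (msqrt_spec P hP).2.2
  set x : EuclideanSpace ℂ (Fin n × Fin n) := WithLp.toLp 2 (fun p : Fin n × Fin n => star (S p.1 p.2)) with hx
  set y : EuclideanSpace ℂ (Fin n × Fin n) := WithLp.toLp 2 (fun p : Fin n × Fin n => (S * W) p.2 p.1) with hy
  have hinner : (inner ℂ x y : ℂ) = (P * W).trace := by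
    rw [PiLp.inner_apply]
    simp only [RCLike.inner_apply, hx, hy, star_star, starRingEnd_apply, star_star]
    rw [show P * W = S * (S * W) by rw [← mul_assoc, hSS]]
    simp only [Matrix.trace, Matrix.diag, Matrix.mul_apply]
    rw [Fintype.sum_prod_type]
    exact Finset.sum_congr rfl fun i _ => Finset.sum_congr rfl fun j _ => mul_comm _ _
  have hxnorm : ‖x‖ ^ 2 = P.trace.re := by
    rw [EuclideanSpace.norm_eq, Real.sq_sqrt (by positivity)]
    rw [← hSS, show S * S = S * Sᴴ by rw [hSH], re_trace_mul_conjTranspose]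
    rw [Fintype.sum_prod_type]
    simp [hx]
  have hynorm : ‖y‖ ^ 2 = P.trace.re := by
    rw [EuclideanSpace.norm_eq, Real.sq_sqrt (by positivity)]
    have : (S * W) * (S * W)ᴴ = P := by
      rw [Matrix.conjTranspose_mul, ← mul_assoc, mul_assoc S W, hW, mul_one, hSH, hSS]
    rw [← this, re_trace_mul_conjTranspose, Fintype.sum_prod_type, Finset.sum_comm]
  have hcs := norm_inner_le_norm (𝕜 := ℂ) x y
  rw [hinner] at hcs
  have htr : (0:ℝ) ≤ P.trace.re := by
    have := hxnorm ▸ sq_nonneg ‖x‖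
    linarith
  calc ‖(P * W).trace‖ = ‖(P * W).trace‖ := rfl
    _ ≤ ‖x‖ * ‖y‖ := hcs
    _ = P.trace.re := by
        have hxn : ‖x‖ = Real.sqrt P.trace.re := by
          rw [← hxnorm]; rw [Real.sqrt_sq (norm_nonneg _)]
        have hyn : ‖y‖ = Real.sqrt P.trace.re := by
          rw [← hynorm]; rw [Real.sqrt_sq (norm_nonneg _)]
        rw [hxn, hyn, Real.mul_self_sqrt htr]

/-- **Lemma 1.** For any matrix `A` with polar decomposition `A = |A|·V`
(`|A| = √(A·A†)`, `V` unitary), `|Tr(A·U)| ≤ Tr(|A|)` for every unitary `U`,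
with equality at `U = V†`; hence `Tr(|A|)` is the maximum of `|Tr(A·U)|` over
all unitary `U`. -/
theorem max_abs_trace_unitary {n : ℕ}
    (A V : Matrix (Fin n) (Fin n) ℂ)
    (hV : Vᴴ * V = 1) (hV' : V * Vᴴ = 1)
    (hpolar : A = msqrt (A * Aᴴ) * V) :
    (∀ U : Matrix (Fin n) (Fin n) ℂ, Uᴴ * U = 1 → U * Uᴴ = 1 →
        ‖(A * U).trace‖ ≤ (msqrt (A * Aᴴ)).trace.re) ∧
      (A * Vᴴ).trace = (msqrt (A * Aᴴ)).trace ∧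
      IsGreatest {x : ℝ | ∃ U : Matrix (Fin n) (Fin n) ℂ,
          Uᴴ * U = 1 ∧ U * Uᴴ = 1 ∧ x = ‖(A * U).trace‖}
        ((msqrt (A * Aᴴ)).trace.re) := by
  have hpsd : (A * Aᴴ).PosSemidef := posSemidef_self_mul_conjTranspose A
  set P := msqrt (A * Aᴴ) with hPdef
  have hPP : P.PosSemidef := (msqrt_spec _ hpsd).1
  have part1 : ∀ U : Matrix (Fin n) (Fin n) ℂ, Uᴴ * U = 1 → U * Uᴴ = 1 →
      ‖(A * U).trace‖ ≤ P.trace.re := by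
    intro U hU hU'
    have hAU : A * U = P * (V * U) := by rw [hpolar, mul_assoc]
    have hVU : (V * U) * (V * U)ᴴ = 1 := by
      rw [Matrix.conjTranspose_mul, ← mul_assoc, mul_assoc V U, hU', mul_one, hV']
    rw [hAU]
    exact abs_trace_psd_mul_unitary P (V * U) hPP hVU
  have heq : A * Vᴴ = P := by rw [hpolar, mul_assoc, hV', mul_one]
  have hdiag : ∀ i, (0 : ℂ) ≤ P i i := fun i => by
    exact hPP.diag_nonneg
  have htrnn : (0 : ℂ) ≤ P.trace := Finset.sum_nonneg fun i _ => hdiag i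
  have him : P.trace.im = 0 := by
    rw [Complex.le_def] at htrnn; simp at htrnn; exact htrnn.2.symm
  have hre : 0 ≤ P.trace.re := by
    rw [Complex.le_def] at htrnn; simp at htrnn; exact htrnn.1
  have habs : ‖P.trace‖ = P.trace.re := by
    rw [show P.trace = (P.trace.re : ℂ) from Complex.ext rfl (by simp [him])]
    simp [Complex.norm_real, abs_of_nonneg hre]
  refine ⟨part1, by rw [heq], ⟨Vᴴ, by simpa using hV', by simpa using hV, by rw [heq, habs]⟩,
    fun x hx => ?_⟩
  obtain ⟨U, hU, hU', rfl⟩ := hx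
  exact part1 U hU hU'
end

section
/- Let ρ0 and ρ1 be n×n complex density matrices with rank(ρ0) + rank(ρ1) = rank(ρ0 + ρ1) = n, set Σ = ρ0 + ρ1, F0 = √(√ρ0 · ρ1 · √ρ0), F1 = √(√ρ1 · ρ0 · √ρ1), and let V be a unitary matrix with √ρ0 · √ρ1 = F0 · V. Let α > 0 be a real number such that ρ0 − α·F0 and ρ1 − (1/α)·F1 are positive semidefinite. Define E0 = Σ⁻¹·√ρ0·(ρ0 − α·F0)·√ρ0·Σ⁻¹, E1 = Σ⁻¹·√ρ1·(ρ1 − (1/α)·F1)·√ρ1·Σ⁻¹, and E? = Σ⁻¹·(√α·√ρ0 + (1/√α)·√ρ1·V†)·F0·(√α·√ρ0 + (1/√α)·V·√ρ1)·Σ⁻¹. Then E0, E1, E? are positive semidefinite, E0 + E1 + E? = 1, and Tr(E0 ρ1) = 0 = Tr(E1 ρ0); that is, (E0, E1, E?) is a USD POVM for (ρ0, ρ1). -/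
open Matrix
open scoped ComplexOrder

open scoped MatrixOrder in
lemma msqrt_eq_cfcSqrt {n : ℕ} {A : Matrix (Fin n) (Fin n) ℂ} (hA : A.PosSemidef) :
    msqrt A = CFC.sqrt A := by
  rw [msqrt, dif_pos hA, CFC.sqrt_eq_cfc, cfc_nnreal_eq_real _ A hA.nonneg, hA.1.cfc_eq]
  simp only [IsHermitian.cfc, Unitary.conjStarAlgAut_apply]
  congr!
  rw [Real.sqrt]


lemma msqrt_posSemidef {n : ℕ} {A : Matrix (Fin n) (Fin n) ℂ} (hA : A.PosSemidef) :
    (msqrt A).PosSemidef := by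
  open scoped MatrixOrder in
  rw [msqrt_eq_cfcSqrt hA]; exact (CFC.sqrt_nonneg A).posSemidef

lemma msqrt_mul_self {n : ℕ} {A : Matrix (Fin n) (Fin n) ℂ} (hA : A.PosSemidef) :
    msqrt A * msqrt A = A := by
  open scoped MatrixOrder in
  rw [msqrt_eq_cfcSqrt hA]; exact CFC.sqrt_mul_sqrt_self A hA.nonneg

lemma msqrt_herm {n : ℕ} {A : Matrix (Fin n) (Fin n) ℂ} (hA : A.PosSemidef) :
    (msqrt A)ᴴ = msqrt A := (msqrt_posSemidef hA).1

lemma eq_msqrt {n : ℕ} {A B : Matrix (Fin n) (Fin n) ℂ} (hB : B.PosSemidef)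
    (hA : A.PosSemidef) (h : A * A = B) : A = msqrt B := by
  open scoped MatrixOrder in
  rw [msqrt_eq_cfcSqrt hB]
  exact (CFC.sqrt_unique h hA.nonneg).symm

/-- A matrix whose `mulVecLin` has trivial range is zero. -/
lemma eq_zero_of_range_bot {n : ℕ} {M : Matrix (Fin n) (Fin n) ℂ}
    (h : LinearMap.range M.mulVecLin = ⊥) : M = 0 := by
  have h0 : M.mulVecLin = 0 := LinearMap.range_eq_bot.mp h
  ext i j
  have := LinearMap.congr_fun h0 (Pi.single j 1)
  rw [Matrix.mulVecLin_apply, Matrix.mulVec_single_one] at this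
  simpa using congrFun this i

set_option maxHeartbeats 1000000 in
/-- **Theorem 4 (POVM validity).** Under the positivity conditions
`ρ0 − α·F0 ≥ 0` and `ρ1 − (1/α)·F1 ≥ 0`, the constructed operators
`E0, E1, E?` form a valid USD POVM for `(ρ0, ρ1)`. -/
theorem optimal_povm_is_usd_povm {n : ℕ}
    (ρ0 ρ1 V E0 E1 Eq : Matrix (Fin n) (Fin n) ℂ)
    (hρ0 : ρ0.PosSemidef) (hρ0tr : ρ0.trace = 1)
    (hρ1 : ρ1.PosSemidef) (hρ1tr : ρ1.trace = 1)
    (hrank : ρ0.rank + ρ1.rank = (ρ0 + ρ1).rank)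
    (hfull : (ρ0 + ρ1).rank = n)
    (hV : Vᴴ * V = 1) (hV' : V * Vᴴ = 1)
    (hpolar : msqrt ρ0 * msqrt ρ1 = msqrt (msqrt ρ0 * ρ1 * msqrt ρ0) * V)
    (α : ℝ) (hα : 0 < α)
    (hpos0 : (ρ0 - (α : ℂ) • msqrt (msqrt ρ0 * ρ1 * msqrt ρ0)).PosSemidef)
    (hpos1 : (ρ1 - (α : ℂ)⁻¹ • msqrt (msqrt ρ1 * ρ0 * msqrt ρ1)).PosSemidef)
    (hE0 : E0 = (ρ0 + ρ1)⁻¹ * msqrt ρ0 *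
      (ρ0 - (α : ℂ) • msqrt (msqrt ρ0 * ρ1 * msqrt ρ0)) * msqrt ρ0 * (ρ0 + ρ1)⁻¹)
    (hE1 : E1 = (ρ0 + ρ1)⁻¹ * msqrt ρ1 *
      (ρ1 - (α : ℂ)⁻¹ • msqrt (msqrt ρ1 * ρ0 * msqrt ρ1)) * msqrt ρ1 * (ρ0 + ρ1)⁻¹)
    (hEq : Eq = (ρ0 + ρ1)⁻¹ *
      ((Real.sqrt α : ℂ) • msqrt ρ0 + (Real.sqrt α : ℂ)⁻¹ • (msqrt ρ1 * Vᴴ)) *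
      msqrt (msqrt ρ0 * ρ1 * msqrt ρ0) *
      ((Real.sqrt α : ℂ) • msqrt ρ0 + (Real.sqrt α : ℂ)⁻¹ • (V * msqrt ρ1)) *
      (ρ0 + ρ1)⁻¹) :
    E0.PosSemidef ∧ E1.PosSemidef ∧ Eq.PosSemidef ∧
      E0 + E1 + Eq = 1 ∧
      (E0 * ρ1).trace = 0 ∧ (E1 * ρ0).trace = 0 := by
  classical
  set S : Matrix (Fin n) (Fin n) ℂ := ρ0 + ρ1 with hSdef
  set A : Matrix (Fin n) (Fin n) ℂ := msqrt ρ0 with hAdef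
  set B : Matrix (Fin n) (Fin n) ℂ := msqrt ρ1 with hBdef
  set F0 : Matrix (Fin n) (Fin n) ℂ := msqrt (A * ρ1 * A) with hF0def
  set F1 : Matrix (Fin n) (Fin n) ℂ := msqrt (B * ρ0 * B) with hF1def
  set c : ℂ := (Real.sqrt α : ℂ) with hcdef
  -- basic facts
  have hApsd : A.PosSemidef := msqrt_posSemidef hρ0
  have hBpsd : B.PosSemidef := msqrt_posSemidef hρ1
  have hAh : Aᴴ = A := msqrt_herm hρ0
  have hBh : Bᴴ = B := msqrt_herm hρ1
  have hA2 : A * A = ρ0 := msqrt_mul_self hρ0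
  have hB2 : B * B = ρ1 := msqrt_mul_self hρ1
  have hAρ1A : (A * ρ1 * A).PosSemidef := by
    have := hρ1.mul_mul_conjTranspose_same A; rwa [hAh] at this
  have hBρ0B : (B * ρ0 * B).PosSemidef := by
    have := hρ0.mul_mul_conjTranspose_same B; rwa [hBh] at this
  have hF0psd : F0.PosSemidef := msqrt_posSemidef hAρ1A
  have hF1psd : F1.PosSemidef := msqrt_posSemidef hBρ0B
  have hF0h : F0ᴴ = F0 := hF0psd.1
  have hF02 : F0 * F0 = A * ρ1 * A := msqrt_mul_self hAρ1A
  -- S is invertible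
  have hS : S.PosSemidef := hρ0.add hρ1
  have hSH : S.IsHermitian := hS.1
  have hfull' : Module.finrank ℂ (LinearMap.range S.mulVecLin) = n := hfull
  have hrtop : LinearMap.range S.mulVecLin = ⊤ := by
    apply Submodule.eq_top_of_finrank_eq
    rw [hfull', Module.finrank_fin_fun]
  have hSu : IsUnit S.det := by
    rw [← Matrix.isUnit_iff_isUnit_det, ← Matrix.mulVec_surjective_iff_isUnit]
    intro y
    obtain ⟨v, hv⟩ := hrtop ▸ Submodule.mem_top (x := y)
    exact ⟨v, hv⟩
  have hT : S⁻¹ * S = 1 := Matrix.nonsing_inv_mul _ hSu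
  have hT' : S * S⁻¹ = 1 := Matrix.mul_nonsing_inv _ hSu
  have hSiH : (S⁻¹).IsHermitian := hSH.inv
  -- the golden identity : ρ0 * S⁻¹ * ρ1 = 0
  have hG : ρ0 * S⁻¹ * ρ1 = 0 := by
    have hsym : ρ0 * S⁻¹ * ρ1 = ρ1 * S⁻¹ * ρ0 := by
      have hρ1S : ρ1 = S - ρ0 := by rw [hSdef]; abel
      have e0 : ρ0 * S⁻¹ * ρ1 = ρ0 - ρ0 * S⁻¹ * ρ0 := by
        rw [hρ1S]
        simp only [Matrix.mul_sub, Matrix.mul_assoc, hT, Matrix.mul_one]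
      have e1 : ρ1 * S⁻¹ * ρ0 = ρ0 - ρ0 * S⁻¹ * ρ0 := by
        rw [hρ1S]
        simp only [Matrix.sub_mul, hT', Matrix.one_mul]
      rw [e0, e1]
    -- range argument
    have hsup : LinearMap.range ρ0.mulVecLin ⊔ LinearMap.range ρ1.mulVecLin = ⊤ := by
      rw [eq_top_iff, ← hrtop]
      rintro x ⟨v, rfl⟩
      have : S.mulVecLin v = ρ0.mulVecLin v + ρ1.mulVecLin v := by
        simp [hSdef, Matrix.mulVecLin_apply, Matrix.add_mulVec]
      rw [this]
      exact Submodule.add_mem_sup (LinearMap.mem_range_self _ v) (LinearMap.mem_range_self _ v)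
    have hinf : LinearMap.range ρ0.mulVecLin ⊓ LinearMap.range ρ1.mulVecLin = ⊥ := by
      have hd := Submodule.finrank_sup_add_finrank_inf_eq
        (LinearMap.range ρ0.mulVecLin) (LinearMap.range ρ1.mulVecLin)
      rw [hsup] at hd
      have hr0 : Module.finrank ℂ (LinearMap.range ρ0.mulVecLin) = ρ0.rank := rfl
      have hr1 : Module.finrank ℂ (LinearMap.range ρ1.mulVecLin) = ρ1.rank := rfl
      rw [hr0, hr1, hrank, hfull, finrank_top, Module.finrank_fin_fun] at hd
      have : Module.finrank ℂ
          ↥(LinearMap.range ρ0.mulVecLin ⊓ LinearMap.range ρ1.mulVecLin) = 0 := by omega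
      exact Submodule.finrank_eq_zero.mp this
    apply eq_zero_of_range_bot
    rw [← le_bot_iff, ← hinf]
    intro x hx
    obtain ⟨v, rfl⟩ := hx
    constructor
    · rw [Matrix.mulVecLin_mul, Matrix.mulVecLin_mul]
      exact LinearMap.mem_range_self _ _
    · rw [hsym, Matrix.mulVecLin_mul, Matrix.mulVecLin_mul]
      exact LinearMap.mem_range_self _ _
  -- consequences : A * S⁻¹ * B = 0 etc.
  have hρ0SB : ρ0 * S⁻¹ * B = 0 := by
    apply (Matrix.mul_self_mul_conjTranspose_eq_zero B (ρ0 * S⁻¹)).mp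
    rw [hBh, hB2]
    exact hG
  have hBSρ0 : B * S⁻¹ * ρ0 = 0 := by
    have := congrArg conjTranspose hρ0SB
    rwa [Matrix.conjTranspose_mul, Matrix.conjTranspose_mul, hBh, hSiH.eq, hρ0.1.eq,
      Matrix.conjTranspose_zero, ← Matrix.mul_assoc] at this
  have hBSA : B * S⁻¹ * A = 0 := by
    apply (Matrix.mul_self_mul_conjTranspose_eq_zero A (B * S⁻¹)).mp
    rw [hAh, hA2]
    exact hBSρ0
  have hASB : A * S⁻¹ * B = 0 := by
    have := congrArg conjTranspose hBSA
    rwa [Matrix.conjTranspose_mul, Matrix.conjTranspose_mul, hBh, hAh, hSiH.eq,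
      Matrix.conjTranspose_zero, ← Matrix.mul_assoc] at this
  have hASρ1 : A * (S⁻¹ * ρ1) = 0 := by
    calc A * (S⁻¹ * ρ1) = (A * S⁻¹ * B) * B := by
          rw [← hB2]; simp only [Matrix.mul_assoc]
      _ = 0 := by rw [hASB, Matrix.zero_mul]
  have hBSρ0' : B * (S⁻¹ * ρ0) = 0 := by rw [← Matrix.mul_assoc]; exact hBSρ0
  -- polar consequences
  have hpolar' : F0 * V = A * B := hpolar.symm
  have hVF0 : Vᴴ * F0 = B * A := by
    have := congrArg conjTranspose hpolar'
    rwa [Matrix.conjTranspose_mul, Matrix.conjTranspose_mul, hF0h, hAh, hBh] at this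
  have hF1eq : Vᴴ * F0 * V = F1 := by
    apply eq_msqrt hBρ0B
    · have := hF0psd.mul_mul_conjTranspose_same Vᴴ
      rwa [Matrix.conjTranspose_conjTranspose] at this
    · calc (Vᴴ * F0 * V) * (Vᴴ * F0 * V)
          = Vᴴ * F0 * (V * Vᴴ) * F0 * V := by
            simp only [Matrix.mul_assoc]
        _ = (Vᴴ * F0) * (F0 * V) := by rw [hV']; simp only [Matrix.mul_one, Matrix.mul_assoc]
        _ = B * (A * A) * B := by rw [hVF0, hpolar']; simp only [Matrix.mul_assoc]
        _ = B * ρ0 * B := by rw [hA2, Matrix.mul_assoc]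
  -- scalar facts
  have hcstar : star c = c := by rw [hcdef]; exact Complex.conj_ofReal _
  have hcc : c * c = (α : ℂ) := by
    rw [hcdef, ← Complex.ofReal_mul, Real.mul_self_sqrt hα.le]
  have hcne : c ≠ 0 := by
    rw [hcdef]
    exact_mod_cast (Real.sqrt_pos.mpr hα).ne'
  have hcd : c * c⁻¹ = 1 := mul_inv_cancel₀ hcne
  have hdc : c⁻¹ * c = 1 := inv_mul_cancel₀ hcne
  have hdd : c⁻¹ * c⁻¹ = (α : ℂ)⁻¹ := by rw [← mul_inv, hcc]
  -- the three cross-product identities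
  have hAF0VB : A * F0 * (V * B) = ρ0 * ρ1 := by
    rw [← Matrix.mul_assoc, Matrix.mul_assoc A F0 V, hpolar', ← hA2, ← hB2]
    simp only [Matrix.mul_assoc]
  have hBVF0A : B * Vᴴ * F0 * A = ρ1 * ρ0 := by
    rw [Matrix.mul_assoc B Vᴴ F0, hVF0, ← hA2, ← hB2]
    simp only [Matrix.mul_assoc]
  have hBVF0VB : B * Vᴴ * F0 * (V * B) = B * F1 * B := by
    rw [← hF1eq]
    simp only [Matrix.mul_assoc]
  -- the core algebraic identity
  have core : A * (ρ0 - (α : ℂ) • F0) * A + B * (ρ1 - (α : ℂ)⁻¹ • F1) * B +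
      (c • A + c⁻¹ • (B * Vᴴ)) * F0 * (c • A + c⁻¹ • (V * B)) = S * S := by
    have hAρ0A : A * ρ0 * A = ρ0 * ρ0 := by
      rw [← hA2]; simp only [Matrix.mul_assoc]
    have hBρ1B : B * ρ1 * B = ρ1 * ρ1 := by
      rw [← hB2]; simp only [Matrix.mul_assoc]
    have e1 : A * (ρ0 - (α : ℂ) • F0) * A = ρ0 * ρ0 - (α : ℂ) • (A * F0 * A) := by
      rw [Matrix.mul_sub, Matrix.sub_mul, mul_smul_comm, smul_mul_assoc, hAρ0A]
    have e2 : B * (ρ1 - (α : ℂ)⁻¹ • F1) * B = ρ1 * ρ1 - (α : ℂ)⁻¹ • (B * F1 * B) := by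
      rw [Matrix.mul_sub, Matrix.sub_mul, mul_smul_comm, smul_mul_assoc, hBρ1B]
    have e3 : (c • A + c⁻¹ • (B * Vᴴ)) * F0 * (c • A + c⁻¹ • (V * B)) =
        (α : ℂ) • (A * F0 * A) + ρ0 * ρ1 + ρ1 * ρ0 + (α : ℂ)⁻¹ • (B * Vᴴ * F0 * (V * B)) := by
      simp only [Matrix.add_mul, Matrix.mul_add, smul_mul_assoc, mul_smul_comm, smul_add, smul_smul]
      rw [hcc, hcd, hdc, hdd, one_smul, one_smul, hAF0VB, hBVF0A]
      abel
    rw [e1, e2, e3, hBVF0VB, hSdef]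
    rw [Matrix.add_mul, Matrix.mul_add, Matrix.mul_add]
    abel
  -- the POVM sums to the identity
  have hsum : E0 + E1 + Eq = 1 := by
    rw [hE0, hE1, hEq]
    have f0 : S⁻¹ * A * (ρ0 - (α : ℂ) • F0) * A * S⁻¹ =
        S⁻¹ * (A * (ρ0 - (α : ℂ) • F0) * A) * S⁻¹ := by simp only [Matrix.mul_assoc]
    have f1 : S⁻¹ * B * (ρ1 - (α : ℂ)⁻¹ • F1) * B * S⁻¹ =
        S⁻¹ * (B * (ρ1 - (α : ℂ)⁻¹ • F1) * B) * S⁻¹ := by simp only [Matrix.mul_assoc]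
    have f2 : S⁻¹ * (c • A + c⁻¹ • (B * Vᴴ)) * F0 * (c • A + c⁻¹ • (V * B)) * S⁻¹ =
        S⁻¹ * ((c • A + c⁻¹ • (B * Vᴴ)) * F0 * (c • A + c⁻¹ • (V * B))) * S⁻¹ := by
      simp only [Matrix.mul_assoc]
    rw [f0, f1, f2, ← Matrix.add_mul, ← Matrix.add_mul, ← Matrix.mul_add, ← Matrix.mul_add,
      core]
    calc S⁻¹ * (S * S) * S⁻¹ = (S⁻¹ * S) * (S * S⁻¹) := by simp only [Matrix.mul_assoc]
      _ = 1 := by rw [hT, hT', Matrix.one_mul]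
  -- positive semidefiniteness
  have hE0psd : E0.PosSemidef := by
    rw [hE0]
    have heq : S⁻¹ * A * (ρ0 - (α : ℂ) • F0) * A * S⁻¹ =
        (S⁻¹ * A) * (ρ0 - (α : ℂ) • F0) * (S⁻¹ * A)ᴴ := by
      rw [Matrix.conjTranspose_mul, hAh, hSiH.eq]
      simp only [Matrix.mul_assoc]
    rw [heq]
    exact hpos0.mul_mul_conjTranspose_same _
  have hE1psd : E1.PosSemidef := by
    rw [hE1]
    have heq : S⁻¹ * B * (ρ1 - (α : ℂ)⁻¹ • F1) * B * S⁻¹ =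
        (S⁻¹ * B) * (ρ1 - (α : ℂ)⁻¹ • F1) * (S⁻¹ * B)ᴴ := by
      rw [Matrix.conjTranspose_mul, hBh, hSiH.eq]
      simp only [Matrix.mul_assoc]
    rw [heq]
    exact hpos1.mul_mul_conjTranspose_same _
  have hLH : (c • A + c⁻¹ • (B * Vᴴ))ᴴ = c • A + c⁻¹ • (V * B) := by
    rw [Matrix.conjTranspose_add, Matrix.conjTranspose_smul, Matrix.conjTranspose_smul,
      Matrix.conjTranspose_mul, Matrix.conjTranspose_conjTranspose, hAh, hBh,
      hcstar, star_inv₀, hcstar]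
  have hEqpsd : Eq.PosSemidef := by
    rw [hEq]
    have heq : S⁻¹ * (c • A + c⁻¹ • (B * Vᴴ)) * F0 * (c • A + c⁻¹ • (V * B)) * S⁻¹ =
        (S⁻¹ * (c • A + c⁻¹ • (B * Vᴴ))) * F0 * (S⁻¹ * (c • A + c⁻¹ • (B * Vᴴ)))ᴴ := by
      rw [Matrix.conjTranspose_mul, hLH, hSiH.eq]
      simp only [Matrix.mul_assoc]
    rw [heq]
    exact hF0psd.mul_mul_conjTranspose_same _
  -- unambiguity
  have h50 : E0 * ρ1 = 0 := by
    rw [hE0]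
    simp only [Matrix.mul_assoc]
    rw [hASρ1]
    simp only [Matrix.mul_zero]
  have h51 : E1 * ρ0 = 0 := by
    rw [hE1]
    simp only [Matrix.mul_assoc]
    rw [hBSρ0']
    simp only [Matrix.mul_zero]
  exact ⟨hE0psd, hE1psd, hEqpsd, hsum,
    by rw [h50, Matrix.trace_zero], by rw [h51, Matrix.trace_zero]⟩
end
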